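/- A perfect elimination ordering of a tree (for instance, repeatedly removing leaves) is also a perfect elimination ordering of its square. -/

import Mathlib

open SimpleGraph

/-- `t < toughness of G`: for every vertex cut `X` (a set whose removal leaves
more than one connected component), `t * (number of components of G - X) < |X|`. -/
def SimpleGraph.ToughnessGT {V : Type*} [Fintype V] (G : SimpleGraph V) (t : ℝ) : Prop :=
  ∀ X : Set V, 1 < Nat.card (G.induce Xᶜ).ConnectedComponent →
    t * Nat.card (G.induce Xᶜ).ConnectedComponent < X.ncard

/-- `G` is `t`-tough: for every vertex cut `X`, `t * (number of components) ≤ |X|`. -/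
def SimpleGraph.ToughGE {V : Type*} [Fintype V] (G : SimpleGraph V) (t : ℝ) : Prop :=
  ∀ X : Set V, 1 < Nat.card (G.induce Xᶜ).ConnectedComponent →
    t * Nat.card (G.induce Xᶜ).ConnectedComponent ≤ X.ncard

/-- `G` is a `k`-tree: it can be built from `K_k` by repeatedly adding a vertex
whose neighbourhood among the previously added vertices is a `k`-clique. -/
def SimpleGraph.IsKTree {V : Type*} [Fintype V] (k : ℕ) (G : SimpleGraph V) : Prop :=
  k ≤ Fintype.card V ∧
    ∃ e : V ≃ Fin (Fintype.card V),
      ∀ v : V, G.IsClique {w : V | G.Adj v w ∧ e w < e v} ∧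
        Set.ncard {w : V | G.Adj v w ∧ e w < e v} = min (e v : ℕ) k

/-- The bud of a vertex `v` in a `k`-tree: its neighbours of degree `k`. -/
def SimpleGraph.bud {V : Type*} (G : SimpleGraph V) (k : ℕ) (v : V) : Set V :=
  {w : V | G.Adj v w ∧ (G.neighborSet w).ncard = k}

/-- `v` is a twig of the `k`-tree `G`: `v` is not universal, the set `S` of its
neighbours of degree `k` is nonempty, and `N(v) \ S` induces `K_k`. -/
def SimpleGraph.IsTwig {V : Type*} (G : SimpleGraph V) (k : ℕ) (v : V) : Prop :=
  (∃ w, w ≠ v ∧ ¬ G.Adj v w) ∧ (G.bud k v).Nonempty ∧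
    G.IsClique (G.neighborSet v \ G.bud k v) ∧ (G.neighborSet v \ G.bud k v).ncard = k

/-- `S` is a squeeze by `v`. -/
def SimpleGraph.IsSqueeze {V : Type*} (G : SimpleGraph V) (v : V) (S : Set V) : Prop :=
  S ⊆ G.neighborSet v ∧ 1 ≤ S.ncard ∧ S.ncard ≤ 2 ∧
    2 ≤ (G.neighborSet v \ S).ncard ∧
    (∀ s ∈ S, (G.neighborSet v \ S).ncard - 1 ≤ ((G.neighborSet v \ S) ∩ G.neighborSet s).ncard) ∧
    (∀ r ∈ G.neighborSet v \ S, S.ncard - 1 ≤ (S ∩ G.neighborSet r).ncard)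

/-- A chordal graph: every cycle of length at least 4 has a chord, i.e. an edge of `G`
between two vertices of the cycle that is not an edge of the cycle. -/
def SimpleGraph.IsChordal {V : Type*} (G : SimpleGraph V) : Prop :=
  ∀ (v : V) (c : G.Walk v v), c.IsCycle → 4 ≤ c.length →
    ∃ x y, x ∈ c.support ∧ y ∈ c.support ∧ G.Adj x y ∧ s(x, y) ∉ c.edges

/-- `H` is a minor of `G`, witnessed by branch sets. -/
def SimpleGraph.HasMinor {V W : Type*} (G : SimpleGraph V) (H : SimpleGraph W) : Prop :=
  ∃ f : W → Set V, (∀ w, (f w).Nonempty) ∧ (∀ w, (G.induce (f w)).Connected) ∧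
    (Pairwise (Function.onFun Disjoint f)) ∧
    ∀ w₁ w₂, H.Adj w₁ w₂ → ∃ a ∈ f w₁, ∃ b ∈ f w₂, G.Adj a b

/-- Planarity, via Wagner's theorem: no `K₅` or `K_{3,3}` minor. -/
def SimpleGraph.IsPlanar {V : Type*} (G : SimpleGraph V) : Prop :=
  ¬ G.HasMinor (completeGraph (Fin 5)) ∧ ¬ G.HasMinor (completeBipartiteGraph (Fin 3) (Fin 3))

/-- `G` is `k`-connected. -/
def SimpleGraph.IsKConnected {V : Type*} [Fintype V] (k : ℕ) (G : SimpleGraph V) : Prop :=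
  k + 1 ≤ Fintype.card V ∧ ∀ X : Set V, X.ncard < k → (G.induce Xᶜ).Connected

/-- The square of a graph: two vertices are adjacent iff their distance is 1 or 2. -/
def SimpleGraph.square {V : Type*} (G : SimpleGraph V) : SimpleGraph V where
  Adj v w := v ≠ w ∧ (G.Adj v w ∨ ∃ u, G.Adj v u ∧ G.Adj u w)
  symm := by
    refine ⟨?_⟩
    rintro v w ⟨hne, h | ⟨u, h1, h2⟩⟩
    · exact ⟨hne.symm, Or.inl h.symm⟩
    · exact ⟨hne.symm, Or.inr ⟨u, h2.symm, h1.symm⟩⟩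
  loopless := ⟨by rintro v ⟨hne, -⟩; exact hne rfl⟩

/-- `G` is Hamilton-connected. -/
def SimpleGraph.IsHamiltonConnected {V : Type*} (G : SimpleGraph V) : Prop :=
  ∀ x y : V, x ≠ y → ∃ p : G.Walk x y, p.IsPath ∧ ∀ w, w ∈ p.support


/-- `e` is a perfect elimination ordering of `G`: each vertex is simplicial in the
subgraph induced by it and the earlier vertices. -/
def SimpleGraph.IsPEO {V : Type*} [Fintype V] (G : SimpleGraph V)
    (e : V ≃ Fin (Fintype.card V)) : Prop :=
  ∀ v : V, G.IsClique {w : V | G.Adj v w ∧ e w < e v}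

private lemma tree_no_triangle {V : Type*} (T : SimpleGraph V) (hT : T.IsTree) {a b c : V}
    (hab : T.Adj a b) (hbc : T.Adj b c) (hac : T.Adj a c) : False := by
  have h1 : (Walk.cons hac Walk.nil : T.Walk a c).IsPath := by simp [hac.ne]
  have h2 : (Walk.cons hab (Walk.cons hbc Walk.nil) : T.Walk a c).IsPath := by
    simp [hab.ne, hbc.ne, hac.ne]
  have := (hT.existsUnique_path a c).unique h1 h2
  simp at this
  exact hbc.ne this.1.symm

private lemma no_two_earlier {V : Type*} [Fintype V] (T : SimpleGraph V) (hT : T.IsTree)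
    (e : V ≃ Fin (Fintype.card V)) (he : T.IsPEO e) {b a c : V}
    (hba : T.Adj b a) (hbc : T.Adj b c) (hac : a ≠ c)
    (h1 : e a < e b) (h2 : e c < e b) : False := by
  have hadj : T.Adj a c := he b ⟨hba, h1⟩ ⟨hbc, h2⟩ hac
  exact tree_no_triangle T hT hba hadj hbc

theorem peo_of_tree_peo_of_square {V : Type*} [Fintype V]
    (T : SimpleGraph V) (hT : T.IsTree) (e : V ≃ Fin (Fintype.card V))
    (he : T.IsPEO e) :
    T.square.IsPEO e := by
  intro v x hx y hy hxy
  obtain ⟨⟨-, hvx⟩, hex⟩ := hx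
  obtain ⟨⟨-, hvy⟩, hey⟩ := hy
  refine ⟨hxy, ?_⟩
  -- helper for length-3 paths x - v - u - y with x ≠ u
  have key3 : ∀ {p q r s : V}, T.Adj q p → T.Adj q r → T.Adj r s → p ≠ r →
      e p < e q → e s < e q → False := by
    intro p q r s hqp hqr hrs hpr hp hs
    rcases lt_or_gt_of_ne (fun h : e r = e q => hqr.ne' (e.injective h)) with h | h
    · exact no_two_earlier T hT e he hqp hqr hpr hp h
    · have hsq : s ≠ q := fun h => by subst h; exact absurd hs (lt_irrefl _)
      exact no_two_earlier T hT e he hqr.symm hrs (Ne.symm hsq) h (hs.trans h)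
  rcases hvx with hvx | ⟨a, hva, hax⟩ <;> rcases hvy with hvy | ⟨b, hvb, hby⟩
  · exact Or.inr ⟨v, hvx.symm, hvy⟩
  · by_cases hxb : x = b
    · subst hxb; exact Or.inl hby
    · exact absurd (key3 hvx hvb hby hxb hex hey) not_false
  · by_cases hya : y = a
    · subst hya; exact Or.inl hax.symm
    · exact absurd (key3 hvy hva hax hya hey hex) not_false
  · by_cases hab : a = b
    · subst hab; exact Or.inr ⟨a, hax.symm, hby⟩
    · exfalso
      rcases lt_or_gt_of_ne (fun h : e a = e v => hva.ne' (e.injective h)) with h | h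
      · rcases lt_or_gt_of_ne (fun h' : e b = e v => hvb.ne' (e.injective h')) with h' | h'
        · exact no_two_earlier T hT e he hva hvb hab h h'
        · have hvy' : v ≠ y := fun hh => by subst hh; exact absurd hey (lt_irrefl _)
          exact no_two_earlier T hT e he hvb.symm hby hvy' h' (hey.trans h')
      · have hvx' : v ≠ x := fun hh => by subst hh; exact absurd hex (lt_irrefl _)
        exact no_two_earlier T hT e he hva.symm hax hvx' h (hex.trans h)
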